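/- Let n ≥ 2 be an integer. Let F : ℝⁿ → ℝⁿ be differentiable everywhere with Jacobian J(x), let x* ∈ ℝⁿ satisfy F(x*) = 0 with J* := J(x*) invertible and c := ‖J*⁻¹‖, and suppose ‖J(x) − J(x*)‖ ≤ M‖x − x*‖ for all x ∈ ℝⁿ, where M > 0. Let x_k ∈ ℝⁿ, B_k ∈ ℝ^{n×n} be generated by the greedy Broyden's method with each B_k invertible. If 48√n c M ‖x₀ − x*‖ + c‖B₀ − J(x₀)‖_F ≤ 1/3, then for all k ≥ 0, ‖x_{k+1} − x*‖ ≤ e·(1 − 1/n)^{k/2}·‖x_k − x*‖. -/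

import Mathlib

open Matrix

noncomputable def vecNorm {n : ℕ} (u : Fin n → ℝ) : ℝ := Real.sqrt (∑ i, u i ^ 2)

noncomputable def frobNorm {n : ℕ} (M : Matrix (Fin n) (Fin n) ℝ) : ℝ :=
  Real.sqrt (∑ i, ∑ j, M i j ^ 2)

noncomputable def specNorm {n : ℕ} (M : Matrix (Fin n) (Fin n) ℝ) : ℝ :=
  sSup {r : ℝ | ∃ u : Fin n → ℝ, vecNorm u = 1 ∧ r = vecNorm (M.mulVec u)}

noncomputable def broyd {n : ℕ} (B A : Matrix (Fin n) (Fin n) ℝ) (u : Fin n → ℝ) :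
    Matrix (Fin n) (Fin n) ℝ :=
  B + (∑ i, u i ^ 2)⁻¹ • ((A - B) * Matrix.vecMulVec u u)

noncomputable def matCLM {n : ℕ} (M : Matrix (Fin n) (Fin n) ℝ) :
    (Fin n → ℝ) →L[ℝ] (Fin n → ℝ) :=
  LinearMap.toContinuousLinearMap M.mulVecLin

namespace GBaux

abbrev E (n : ℕ) := EuclideanSpace ℝ (Fin n)

noncomputable def toE {n : ℕ} (u : Fin n → ℝ) : E n := (WithLp.equiv 2 _).symm u

lemma toE_sub {n : ℕ} (u v : Fin n → ℝ) : toE (u - v) = toE u - toE v := rfl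

lemma vecNorm_eq {n : ℕ} (u : Fin n → ℝ) : vecNorm u = ‖toE u‖ := by
  rw [EuclideanSpace.norm_eq]
  simp [vecNorm, toE, sq_abs]

lemma vecNorm_nonneg {n : ℕ} (u : Fin n → ℝ) : 0 ≤ vecNorm u := Real.sqrt_nonneg _

noncomputable def clm {n : ℕ} (M : Matrix (Fin n) (Fin n) ℝ) :
    E n →L[ℝ] E n := Matrix.toEuclideanCLM (𝕜 := ℝ) M

lemma clm_apply {n : ℕ} (M : Matrix (Fin n) (Fin n) ℝ) (u : Fin n → ℝ) :
    clm M (toE u) = toE (M.mulVec u) := by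
  simp [clm, toE, Matrix.toLin'_apply]

lemma specNorm_eq {n : ℕ} (hn : 1 ≤ n) (M : Matrix (Fin n) (Fin n) ℝ) :
    specNorm M = ‖clm M‖ := by
  have i0 : Fin n := ⟨0, hn⟩
  have hset : {r : ℝ | ∃ u : Fin n → ℝ, vecNorm u = 1 ∧ r = vecNorm (M.mulVec u)}
      = (fun y : E n => ‖clm M y‖) '' Metric.sphere 0 1 := by
    ext r
    constructor
    · rintro ⟨u, hu, rfl⟩
      refine ⟨toE u, by simpa [mem_sphere_iff_norm, ← vecNorm_eq] using hu, ?_⟩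
      show ‖clm M (toE u)‖ = vecNorm (M.mulVec u)
      rw [clm_apply]; exact (vecNorm_eq _).symm
    · rintro ⟨y, hy, rfl⟩
      show ∃ u, vecNorm u = 1 ∧ ‖clm M y‖ = vecNorm (M.mulVec u)
      refine ⟨WithLp.equiv 2 _ y, ?_, ?_⟩
      · rw [vecNorm_eq]; simpa [toE] using (mem_sphere_zero_iff_norm.1 hy)
      · rw [vecNorm_eq, ← clm_apply]; simp [toE]
  rw [specNorm, hset]
  refine csSup_eq_of_forall_le_of_forall_lt_exists_gt ?_ ?_ ?_
  · exact ⟨‖clm M (EuclideanSpace.single i0 (1:ℝ))‖,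
      ⟨EuclideanSpace.single i0 (1:ℝ), by simp [EuclideanSpace.norm_single], rfl⟩⟩
  · rintro - ⟨y, hy, rfl⟩
    show ‖clm M y‖ ≤ ‖clm M‖
    calc ‖clm M y‖ ≤ ‖clm M‖ * ‖y‖ := (clm M).le_opNorm y
    _ = ‖clm M‖ := by rw [mem_sphere_zero_iff_norm.1 hy, mul_one]
  · intro w hw
    rcases lt_or_ge w 0 with hw0 | hw0
    · exact ⟨‖clm M (EuclideanSpace.single i0 (1:ℝ))‖,
        ⟨EuclideanSpace.single i0 (1:ℝ), by simp [EuclideanSpace.norm_single], rfl⟩,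
        lt_of_lt_of_le hw0 (norm_nonneg _)⟩
    · obtain ⟨y, hy1, hy2⟩ := (clm M).exists_lt_apply_of_lt_opNorm hw
      have hy0 : y ≠ 0 := by
        rintro rfl
        simp only [map_zero, norm_zero] at hy2
        exact absurd hy2 (not_lt.2 hw0)
      have hny : 0 < ‖y‖ := norm_pos_iff.2 hy0
      refine ⟨‖(clm M) (‖y‖⁻¹ • y)‖, ⟨‖y‖⁻¹ • y, ?_, rfl⟩, ?_⟩
      · simp [norm_smul, abs_of_nonneg (inv_nonneg.2 hny.le), inv_mul_cancel₀ hny.ne']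
      · rw [(clm M).map_smul, norm_smul]
        simp only [norm_inv, norm_norm]
        have h2 : ‖y‖ * ‖y‖⁻¹ = 1 := mul_inv_cancel₀ hny.ne'
        have h3 : (0:ℝ) < ‖y‖⁻¹ := inv_pos.2 hny
        nlinarith [norm_nonneg (clm M y)]


variable {n : ℕ}

lemma sum_sq_nonneg (f : Fin n → ℝ) : (0:ℝ) ≤ ∑ i, f i ^ 2 :=
  Finset.sum_nonneg fun i _ => sq_nonneg _

lemma vecNorm_sq (u : Fin n → ℝ) : vecNorm u ^ 2 = ∑ i, u i ^ 2 :=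
  Real.sq_sqrt (sum_sq_nonneg _)

lemma frob_sq (M : Matrix (Fin n) (Fin n) ℝ) : frobNorm M ^ 2 = ∑ i, ∑ j, M i j ^ 2 :=
  Real.sq_sqrt (Finset.sum_nonneg fun i _ => sum_sq_nonneg _)

noncomputable def flat (M : Matrix (Fin n) (Fin n) ℝ) : EuclideanSpace ℝ (Fin n × Fin n) :=
  (WithLp.equiv 2 _).symm (fun p => M p.1 p.2)

lemma flat_add (A B : Matrix (Fin n) (Fin n) ℝ) : flat (A + B) = flat A + flat B := rfl

lemma frobNorm_eq_flat (M : Matrix (Fin n) (Fin n) ℝ) : frobNorm M = ‖flat M‖ := by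
  rw [EuclideanSpace.norm_eq]
  simp [frobNorm, flat, sq_abs, Fintype.sum_prod_type]

lemma frobNorm_nonneg (M : Matrix (Fin n) (Fin n) ℝ) : 0 ≤ frobNorm M := Real.sqrt_nonneg _

lemma frobNorm_add_le (A B : Matrix (Fin n) (Fin n) ℝ) :
    frobNorm (A + B) ≤ frobNorm A + frobNorm B := by
  rw [frobNorm_eq_flat, frobNorm_eq_flat, frobNorm_eq_flat, flat_add]
  exact norm_add_le _ _

lemma vecNorm_single (j : Fin n) : vecNorm (Pi.single j (1:ℝ)) = 1 := by
  have h : (∑ i, (Pi.single j (1:ℝ) : Fin n → ℝ) i ^ 2) = 1 := by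
    simp [Pi.single_apply]
  rw [vecNorm, h, Real.sqrt_one]

lemma col_sq (M : Matrix (Fin n) (Fin n) ℝ) (j : Fin n) :
    vecNorm (M.mulVec (Pi.single j 1)) ^ 2 = ∑ a, M a j ^ 2 := by
  rw [vecNorm_sq]
  simp


end GBaux

namespace GBaux
variable {n : ℕ}

lemma clm_add (A B : Matrix (Fin n) (Fin n) ℝ) : clm (A + B) = clm A + clm B :=
  map_add (Matrix.toEuclideanCLM (𝕜 := ℝ)) A B

lemma clm_sub (A B : Matrix (Fin n) (Fin n) ℝ) : clm (A - B) = clm A - clm B :=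
  map_sub (Matrix.toEuclideanCLM (𝕜 := ℝ)) A B

lemma clm_mul (A B : Matrix (Fin n) (Fin n) ℝ) : clm (A * B) = clm A * clm B :=
  map_mul (Matrix.toEuclideanCLM (𝕜 := ℝ)) A B

lemma clm_one : clm (1 : Matrix (Fin n) (Fin n) ℝ) = 1 :=
  map_one (Matrix.toEuclideanCLM (𝕜 := ℝ))

lemma specNorm_nonneg (hn : 1 ≤ n) (M : Matrix (Fin n) (Fin n) ℝ) : 0 ≤ specNorm M := by
  rw [specNorm_eq hn]; exact norm_nonneg _

lemma spec_mulVec_le (hn : 1 ≤ n) (M : Matrix (Fin n) (Fin n) ℝ) (u : Fin n → ℝ) :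
    vecNorm (M.mulVec u) ≤ specNorm M * vecNorm u := by
  rw [specNorm_eq hn, vecNorm_eq, vecNorm_eq, ← clm_apply]
  exact (clm M).le_opNorm _

lemma specNorm_add_le (hn : 1 ≤ n) (A B : Matrix (Fin n) (Fin n) ℝ) :
    specNorm (A + B) ≤ specNorm A + specNorm B := by
  rw [specNorm_eq hn, specNorm_eq hn, specNorm_eq hn, clm_add]
  exact norm_add_le _ _

lemma specNorm_sub_le (hn : 1 ≤ n) (A B : Matrix (Fin n) (Fin n) ℝ) :
    specNorm (A - B) ≤ specNorm A + specNorm B := by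
  rw [specNorm_eq hn, specNorm_eq hn, specNorm_eq hn, clm_sub]
  exact norm_sub_le _ _

lemma specNorm_neg (hn : 1 ≤ n) (A : Matrix (Fin n) (Fin n) ℝ) : specNorm (-A) = specNorm A := by
  rw [specNorm_eq hn, specNorm_eq hn,
    show clm (-A) = -(clm A) from map_neg (Matrix.toEuclideanCLM (𝕜 := ℝ)) A, norm_neg]

lemma specNorm_mul_le (hn : 1 ≤ n) (A B : Matrix (Fin n) (Fin n) ℝ) :
    specNorm (A * B) ≤ specNorm A * specNorm B := by
  rw [specNorm_eq hn, specNorm_eq hn, specNorm_eq hn, clm_mul]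
  exact norm_mul_le _ _

lemma nontrivE (hn : 1 ≤ n) : Nontrivial (E n) := by
  refine ⟨EuclideanSpace.single ⟨0, hn⟩ (1:ℝ), 0, fun h => ?_⟩
  have := congrArg norm h
  rw [EuclideanSpace.norm_single, norm_zero, norm_one] at this
  exact one_ne_zero this

lemma specNorm_one (hn : 1 ≤ n) : specNorm (1 : Matrix (Fin n) (Fin n) ℝ) = 1 := by
  haveI := nontrivE hn
  rw [specNorm_eq hn, clm_one]
  exact norm_one

lemma specNorm_le_frobNorm (hn : 1 ≤ n) (M : Matrix (Fin n) (Fin n) ℝ) : specNorm M ≤ frobNorm M := by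
  rw [specNorm_eq hn]
  refine ContinuousLinearMap.opNorm_le_bound _ (frobNorm_nonneg M) fun y => ?_
  set u : Fin n → ℝ := WithLp.equiv 2 _ y with hu
  have hy : y = toE u := rfl
  rw [hy, clm_apply, ← vecNorm_eq, ← vecNorm_eq]
  have h1 : vecNorm (M.mulVec u) ^ 2 ≤ (frobNorm M * vecNorm u) ^ 2 := by
    rw [vecNorm_sq, mul_pow, frob_sq, vecNorm_sq]
    have : ∀ i, (M.mulVec u i) ^ 2 ≤ (∑ j, M i j ^ 2) * (∑ j, u j ^ 2) := by
      intro i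
      simpa [Matrix.mulVec, dotProduct] using
        Finset.sum_mul_sq_le_sq_mul_sq Finset.univ (fun j => M i j) u
    calc (∑ i, (M.mulVec u i) ^ 2) ≤ ∑ i, (∑ j, M i j ^ 2) * (∑ j, u j ^ 2) :=
          Finset.sum_le_sum fun i _ => this i
    _ = (∑ i, ∑ j, M i j ^ 2) * (∑ j, u j ^ 2) := by rw [Finset.sum_mul]
  have h2 := Real.sqrt_le_sqrt h1
  rwa [Real.sqrt_sq (vecNorm_nonneg _),
    Real.sqrt_sq (mul_nonneg (frobNorm_nonneg M) (vecNorm_nonneg _))] at h2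

lemma frobNorm_le_sqrtn_mul_spec (hn : 1 ≤ n) (M : Matrix (Fin n) (Fin n) ℝ) :
    frobNorm M ≤ Real.sqrt n * specNorm M := by
  have h1 : frobNorm M ^ 2 ≤ (n : ℝ) * specNorm M ^ 2 := by
    rw [frob_sq, Finset.sum_comm]
    have hcol : ∀ j, (∑ i, M i j ^ 2) ≤ specNorm M ^ 2 := by
      intro j
      rw [← col_sq]
      have h := spec_mulVec_le hn M (Pi.single j 1)
      rw [vecNorm_single, mul_one] at h
      exact pow_le_pow_left₀ (vecNorm_nonneg _) h 2
    calc (∑ j, ∑ i, M i j ^ 2) ≤ ∑ _j : Fin n, specNorm M ^ 2 :=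
          Finset.sum_le_sum fun j _ => hcol j
    _ = (n : ℝ) * specNorm M ^ 2 := by simp [Finset.sum_const, nsmul_eq_mul]
  have h2 : (Real.sqrt n * specNorm M) ^ 2 = (n:ℝ) * specNorm M ^ 2 := by
    rw [mul_pow, Real.sq_sqrt (Nat.cast_nonneg n)]
  have h3 : 0 ≤ Real.sqrt n * specNorm M :=
    mul_nonneg (Real.sqrt_nonneg _) (specNorm_nonneg hn M)
  nlinarith [frobNorm_nonneg M]

end GBaux

namespace GBaux
variable {n : ℕ}

lemma broyd_entry (B A : Matrix (Fin n) (Fin n) ℝ) (i : Fin n) (a b : Fin n) :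
    (broyd B A (Pi.single i 1) - A) a b = if b = i then 0 else (B - A) a b := by
  have hsum : (∑ l, (Pi.single i (1:ℝ) : Fin n → ℝ) l ^ 2) = 1 := by
    simp [Pi.single_apply]
  rw [broyd, hsum]
  by_cases h : b = i <;>
    simp [h, Matrix.mul_apply, Matrix.vecMulVec_apply, Pi.single_apply, Matrix.sub_apply,
      Matrix.add_apply, Finset.mul_sum, mul_ite, ite_and]

lemma broyd_frob_sq (B A : Matrix (Fin n) (Fin n) ℝ) (i : Fin n) :
    frobNorm (broyd B A (Pi.single i 1) - A) ^ 2
      = frobNorm (B - A) ^ 2 - ∑ a, (B - A) a i ^ 2 := by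
  rw [frob_sq, frob_sq]
  have hrow : ∀ a : Fin n, (∑ b, (broyd B A (Pi.single i 1) - A) a b ^ 2)
      = (∑ b, (B - A) a b ^ 2) - (B - A) a i ^ 2 := by
    intro a
    have h1 : ∀ b, (broyd B A (Pi.single i 1) - A) a b ^ 2
        = (B - A) a b ^ 2 - (if b = i then (B - A) a b ^ 2 else 0) := by
      intro b
      rw [broyd_entry]
      by_cases h : b = i <;> simp [h]
    rw [Finset.sum_congr rfl fun b _ => h1 b, Finset.sum_sub_distrib,
      Finset.sum_ite_eq' Finset.univ i (fun b => (B - A) a b ^ 2)]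
    simp
  rw [Finset.sum_congr rfl fun a _ => hrow a, Finset.sum_sub_distrib]

lemma inv_bound (hn : 1 ≤ n) (A Bk : Matrix (Fin n) (Fin n) ℝ)
    (hA : IsUnit A) (hB : IsUnit Bk)
    (h : specNorm A⁻¹ * specNorm (Bk - A) ≤ 1 / 2) :
    specNorm Bk⁻¹ ≤ 2 * specNorm A⁻¹ := by
  have hAd : IsUnit A.det := (Matrix.isUnit_iff_isUnit_det A).1 hA
  have hBd : IsUnit Bk.det := (Matrix.isUnit_iff_isUnit_det Bk).1 hB
  set X := Bk⁻¹ * A with hX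
  set E0 := A⁻¹ * (A - Bk) with hE0
  have hXE : X * E0 = X - 1 := by
    rw [hX, hE0, mul_assoc, ← mul_assoc A A⁻¹, Matrix.mul_nonsing_inv A hAd, one_mul,
      mul_sub, Matrix.nonsing_inv_mul Bk hBd]
  have hX1 : X = 1 + X * E0 := by rw [hXE]; abel
  have hE0le : specNorm E0 ≤ 1 / 2 := by
    calc specNorm E0 ≤ specNorm A⁻¹ * specNorm (A - Bk) := specNorm_mul_le hn _ _
    _ = specNorm A⁻¹ * specNorm (Bk - A) := by
        rw [show A - Bk = -(Bk - A) by abel, specNorm_neg hn]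
    _ ≤ 1 / 2 := h
  have hXle : specNorm X ≤ 2 := by
    have h1 : specNorm X ≤ 1 + specNorm X * specNorm E0 := by
      calc specNorm X = specNorm (1 + X * E0) := by rw [← hX1]
      _ ≤ specNorm 1 + specNorm (X * E0) := specNorm_add_le hn _ _
      _ ≤ 1 + specNorm X * specNorm E0 := by
          rw [specNorm_one hn]
          exact (add_le_add_iff_left 1).2 (specNorm_mul_le hn _ _)
    nlinarith [specNorm_nonneg hn X, specNorm_nonneg hn E0]
  have hBinv : Bk⁻¹ = X * A⁻¹ := by
    rw [hX, mul_assoc, Matrix.mul_nonsing_inv A hAd, mul_one]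
  calc specNorm Bk⁻¹ = specNorm (X * A⁻¹) := by rw [hBinv]
  _ ≤ specNorm X * specNorm A⁻¹ := specNorm_mul_le hn _ _
  _ ≤ 2 * specNorm A⁻¹ := by
      have := specNorm_nonneg hn (A⁻¹)
      nlinarith

end GBaux

namespace GBaux
variable {n : ℕ}

noncomputable def L (n : ℕ) : E n ≃L[ℝ] (Fin n → ℝ) :=
  PiLp.continuousLinearEquiv 2 ℝ (fun _ : Fin n => ℝ)

lemma conj_eq (A : Matrix (Fin n) (Fin n) ℝ) :
    ((L n).symm : (Fin n → ℝ) →L[ℝ] E n).comp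
      ((matCLM A).comp ((L n) : E n →L[ℝ] (Fin n → ℝ))) = clm A := by
  ext z
  rfl

lemma taylor_bound (hn : 1 ≤ n) (F : (Fin n → ℝ) → (Fin n → ℝ))
    (J : (Fin n → ℝ) → Matrix (Fin n) (Fin n) ℝ)
    (hF : ∀ x, HasFDerivAt F (matCLM (J x)) x)
    (xs : Fin n → ℝ) (M : ℝ) (hM : 0 ≤ M)
    (hLip : ∀ x, specNorm (J x - J xs) ≤ M * vecNorm (x - xs)) (y : Fin n → ℝ) :
    vecNorm (F y - F xs - (J xs).mulVec (y - xs)) ≤ M * vecNorm (y - xs) ^ 2 := by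
  set ψ : E n → E n := fun z => (L n).symm (F ((L n) z)) - clm (J xs) z with hψ
  have hderiv : ∀ z : E n, HasFDerivAt ψ (clm (J ((L n) z)) - clm (J xs)) z := by
    intro z
    have h1 : HasFDerivAt (fun w : E n => F ((L n) w))
        ((matCLM (J ((L n) z))).comp ((L n) : E n →L[ℝ] (Fin n → ℝ))) z :=
      (hF ((L n) z)).comp z ((L n).hasFDerivAt)
    have h2 : HasFDerivAt (fun w : E n => (L n).symm (F ((L n) w)))
        (((L n).symm : (Fin n → ℝ) →L[ℝ] E n).comp
          ((matCLM (J ((L n) z))).comp ((L n) : E n →L[ℝ] (Fin n → ℝ)))) z :=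
      ((L n).symm.hasFDerivAt).comp z h1
    rw [conj_eq] at h2
    exact h2.sub ((clm (J xs)).hasFDerivAt)
  set r : ℝ := ‖toE y - toE xs‖ with hr
  have hr0 : 0 ≤ r := norm_nonneg _
  have key := Convex.norm_image_sub_le_of_norm_hasFDerivWithin_le
    (f := ψ) (f' := fun z => clm (J ((L n) z)) - clm (J xs)) (C := M * r)
    (s := Metric.closedBall (toE xs) r)
    (fun z _ => (hderiv z).hasFDerivWithinAt)
    (fun z hz => by
      show ‖clm (J ((L n) z)) - clm (J xs)‖ ≤ M * r
      rw [← clm_sub, ← specNorm_eq hn]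
      refine (hLip ((L n) z)).trans ?_
      have hv : vecNorm ((L n) z - xs) = ‖z - toE xs‖ := by
        rw [vecNorm_eq]; rfl
      rw [hv]
      have := Metric.mem_closedBall.1 hz
      rw [dist_eq_norm] at this
      exact mul_le_mul_of_nonneg_left this hM)
    (convex_closedBall _ _)
    (Metric.mem_closedBall_self hr0)
    (by rw [Metric.mem_closedBall, dist_eq_norm])
  have hA : ∀ u : Fin n → ℝ, (L n).symm (F ((L n) (toE u))) = toE (F u) := fun u => rfl
  have hkey2 : ψ (toE y) - ψ (toE xs)
      = toE (F y - F xs - (J xs).mulVec (y - xs)) := by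
    have e1 : toE (F y - F xs - (J xs).mulVec (y - xs))
        = toE (F y) - toE (F xs) - (clm (J xs) (toE y) - clm (J xs) (toE xs)) := by
      rw [toE_sub, toE_sub]
      have e2 : toE ((J xs).mulVec (y - xs)) = clm (J xs) (toE y) - clm (J xs) (toE xs) := by
        rw [← clm_apply, toE_sub, map_sub]
      rw [e2]
    rw [e1]
    simp only [hψ, hA]
    abel
  have hnorm : vecNorm (F y - F xs - (J xs).mulVec (y - xs)) = ‖ψ (toE y) - ψ (toE xs)‖ := by
    rw [vecNorm_eq, hkey2]
  rw [hnorm]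
  calc ‖ψ (toE y) - ψ (toE xs)‖ ≤ M * r * ‖toE y - toE xs‖ := key
  _ = M * vecNorm (y - xs) ^ 2 := by
      rw [hr, vecNorm_eq, toE_sub]
      ring

end GBaux

namespace GBaux
variable {n : ℕ}

lemma greedy_step (hn : 1 ≤ n) (Bk A : Matrix (Fin n) (Fin n) ℝ) (i0 : Fin n)
    (hg : ∀ i, vecNorm ((Bk - A).mulVec (Pi.single i 1))
      ≤ vecNorm ((Bk - A).mulVec (Pi.single i0 1))) :
    frobNorm (broyd Bk A (Pi.single i0 1) - A)
      ≤ Real.sqrt (1 - 1/(n:ℝ)) * frobNorm (Bk - A) := by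
  set D := Bk - A with hD
  have hcol : ∀ i, (∑ a, D a i ^ 2) ≤ ∑ a, D a i0 ^ 2 := by
    intro i
    have h := hg i
    have h2 := pow_le_pow_left₀ (vecNorm_nonneg _) h 2
    rwa [col_sq, col_sq] at h2
  have hfs : frobNorm D ^ 2 ≤ (n : ℝ) * ∑ a, D a i0 ^ 2 := by
    rw [frob_sq, Finset.sum_comm]
    calc (∑ j, ∑ a, D a j ^ 2) ≤ ∑ _j : Fin n, ∑ a, D a i0 ^ 2 :=
          Finset.sum_le_sum fun j _ => hcol j
    _ = (n : ℝ) * ∑ a, D a i0 ^ 2 := by simp [Finset.sum_const, nsmul_eq_mul]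
  have hupd := broyd_frob_sq Bk A i0
  have hn0 : (0:ℝ) < n := by exact_mod_cast Nat.lt_of_lt_of_le Nat.zero_lt_one hn
  have h1n : (0:ℝ) ≤ 1 - 1/(n:ℝ) := by
    rw [sub_nonneg, div_le_one hn0]
    exact_mod_cast hn
  have hineq : frobNorm (broyd Bk A (Pi.single i0 1) - A) ^ 2
      ≤ (1 - 1/(n:ℝ)) * frobNorm D ^ 2 := by
    rw [hupd, ← hD]
    have h1 : (1/(n:ℝ)) * frobNorm D ^ 2 ≤ ∑ a, D a i0 ^ 2 := by
      rw [div_mul_eq_mul_div, one_mul, div_le_iff₀ hn0]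
      nlinarith [hfs]
    nlinarith
  have h2 := Real.sqrt_le_sqrt hineq
  rw [Real.sqrt_sq (frobNorm_nonneg _)] at h2
  refine h2.trans ?_
  rw [Real.sqrt_mul h1n (frobNorm D ^2), Real.sqrt_sq (frobNorm_nonneg _), hD]

lemma step_bound (hn : 1 ≤ n) (F : (Fin n → ℝ) → (Fin n → ℝ))
    (J : (Fin n → ℝ) → Matrix (Fin n) (Fin n) ℝ)
    (hF : ∀ x, HasFDerivAt F (matCLM (J x)) x)
    (xs : Fin n → ℝ) (hxs : F xs = 0) (hJs : IsUnit (J xs))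
    (c : ℝ) (hc : c = specNorm (J xs)⁻¹) (M : ℝ) (hM : 0 ≤ M)
    (hLip : ∀ x, specNorm (J x - J xs) ≤ M * vecNorm (x - xs))
    (Bk : Matrix (Fin n) (Fin n) ℝ) (hB : IsUnit Bk) (xk : Fin n → ℝ)
    (hsmall : c * frobNorm (Bk - J xk) + c * M * vecNorm (xk - xs) ≤ 1/2) :
    vecNorm ((xk - Bk⁻¹.mulVec (F xk)) - xs)
      ≤ 2 * (c * frobNorm (Bk - J xk) + 2 * (c * M * vecNorm (xk - xs)))
        * vecNorm (xk - xs) := by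
  have hc0 : 0 ≤ c := hc ▸ specNorm_nonneg hn _
  set v : Fin n → ℝ := xk - xs with hv
  set τ : ℝ := vecNorm v with hτ
  have hτ0 : 0 ≤ τ := vecNorm_nonneg _
  have hBd : IsUnit Bk.det := (Matrix.isUnit_iff_isUnit_det Bk).1 hB
  -- rewrite the step
  have hx1 : (xk - Bk⁻¹.mulVec (F xk)) - xs = Bk⁻¹.mulVec (Bk.mulVec v - F xk) := by
    rw [Matrix.mulVec_sub, Matrix.mulVec_mulVec, Matrix.nonsing_inv_mul _ hBd,
      Matrix.one_mulVec, hv]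
    abel
  -- decomposition
  have hdecomp : Bk.mulVec v - F xk
      = (Bk - J xk).mulVec v + (J xk - J xs).mulVec v
        - (F xk - F xs - (J xs).mulVec v) := by
    rw [Matrix.sub_mulVec, Matrix.sub_mulVec, hxs]
    abel
  -- triangle inequality for vecNorm
  have tri : ∀ a b d : Fin n → ℝ, vecNorm (a + b - d) ≤ vecNorm a + vecNorm b + vecNorm d := by
    intro a b d
    rw [vecNorm_eq, vecNorm_eq, vecNorm_eq, vecNorm_eq,
      show toE (a + b - d) = toE a + toE b - toE d from rfl]
    calc ‖toE a + toE b - toE d‖ ≤ ‖toE a + toE b‖ + ‖toE d‖ := norm_sub_le _ _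
    _ ≤ ‖toE a‖ + ‖toE b‖ + ‖toE d‖ := by linarith [norm_add_le (toE a) (toE b)]
  -- bounds
  have b1 : vecNorm ((Bk - J xk).mulVec v) ≤ frobNorm (Bk - J xk) * τ := by
    refine (spec_mulVec_le hn _ _).trans ?_
    exact mul_le_mul_of_nonneg_right (specNorm_le_frobNorm hn _) hτ0
  have b2 : vecNorm ((J xk - J xs).mulVec v) ≤ (M * τ) * τ := by
    refine (spec_mulVec_le hn _ _).trans ?_
    exact mul_le_mul_of_nonneg_right (by rw [hτ, hv]; exact hLip xk) hτ0
  have b3 : vecNorm (F xk - F xs - (J xs).mulVec v) ≤ M * τ ^ 2 := by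
    rw [hv, hτ]
    exact taylor_bound hn F J hF xs M hM hLip xk
  have hw : vecNorm (Bk.mulVec v - F xk) ≤ (frobNorm (Bk - J xk) + 2 * (M * τ)) * τ := by
    rw [hdecomp]
    calc vecNorm _ ≤ vecNorm ((Bk - J xk).mulVec v) + vecNorm ((J xk - J xs).mulVec v)
          + vecNorm (F xk - F xs - (J xs).mulVec v) := tri _ _ _
    _ ≤ frobNorm (Bk - J xk) * τ + (M * τ) * τ + M * τ ^ 2 := by linarith
    _ = (frobNorm (Bk - J xk) + 2 * (M * τ)) * τ := by ring
  -- inverse bound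
  have hspecB : specNorm (Bk - J xs) ≤ frobNorm (Bk - J xk) + M * τ := by
    calc specNorm (Bk - J xs) = specNorm ((Bk - J xk) + (J xk - J xs)) := by
          rw [show (Bk - J xk) + (J xk - J xs) = Bk - J xs by abel]
    _ ≤ specNorm (Bk - J xk) + specNorm (J xk - J xs) := specNorm_add_le hn _ _
    _ ≤ frobNorm (Bk - J xk) + M * τ := by
        have := specNorm_le_frobNorm hn (Bk - J xk)
        have h2 := hLip xk
        rw [← hv, ← hτ] at h2
        linarith
  have hinv : specNorm Bk⁻¹ ≤ 2 * c := by
    rw [hc]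
    refine inv_bound hn (J xs) Bk hJs hB ?_
    rw [← hc]
    calc c * specNorm (Bk - J xs) ≤ c * (frobNorm (Bk - J xk) + M * τ) :=
          mul_le_mul_of_nonneg_left hspecB hc0
    _ = c * frobNorm (Bk - J xk) + c * M * τ := by ring
    _ ≤ 1/2 := by rw [hτ, hv] at hsmall ⊢; exact hsmall
  -- combine
  rw [hx1]
  calc vecNorm (Bk⁻¹.mulVec (Bk.mulVec v - F xk))
      ≤ specNorm Bk⁻¹ * vecNorm (Bk.mulVec v - F xk) := spec_mulVec_le hn _ _
  _ ≤ (2 * c) * ((frobNorm (Bk - J xk) + 2 * (M * τ)) * τ) := by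
      refine mul_le_mul hinv hw (vecNorm_nonneg _) (by linarith [specNorm_nonneg hn Bk⁻¹])
  _ = 2 * (c * frobNorm (Bk - J xk) + 2 * (c * M * τ)) * τ := by ring
  _ ≤ 2 * (c * frobNorm (Bk - J xk) + 2 * (c * M * vecNorm (xk - xs))) * vecNorm (xk - xs) := by
      rw [hτ, hv]

end GBaux

namespace GBaux

lemma abstract_rec (g t : ℕ → ℝ) (s q : ℝ)
    (hg0 : ∀ k, 0 ≤ g k) (ht0 : ∀ k, 0 ≤ t k)
    (hs1 : 1 ≤ s) (hq0 : 0 ≤ q) (hq1 : q ≤ 1) (hq12 : 12/17 ≤ q)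
    (h0 : g 0 + 48 * (s * t 0) ≤ 1/3)
    (hrecT : ∀ k, g k + 2 * t k ≤ 1/3 → t (k+1) ≤ 2 * (g k + 2 * t k) * t k)
    (hrecG : ∀ k, g (k+1) ≤ q * (g k + s * (t k + t (k+1)))) :
    ∀ k, (g k + 2 * t k ≤ 1/3) ∧ (2 * (g k + 2 * t k) ≤ (2/3) * q ^ k) := by
  have hs0 : (0:ℝ) ≤ s := by linarith
  have key : ∀ k, (g k + 2 * t k + 46 * (s * t k) ≤ 1/3)
      ∧ (g k + 36 * (s * t k) ≤ 1/3 * q ^ k) := by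
    intro k
    induction k with
    | zero =>
      have htt : t 0 ≤ s * t 0 := by nlinarith [ht0 0]
      have hst0 : 0 ≤ s * t 0 := mul_nonneg hs0 (ht0 0)
      constructor
      · linarith
      · rw [pow_zero]; linarith
    | succ k ih =>
      obtain ⟨ihA, ihB⟩ := ih
      have hst0 : 0 ≤ s * t k := mul_nonneg hs0 (ht0 k)
      have hst10 : 0 ≤ s * t (k+1) := mul_nonneg hs0 (ht0 (k+1))
      have httk' : t k ≤ s * t k := by nlinarith [ht0 k]
      have hdk : g k + 2 * t k ≤ 1/3 := by linarith
      have ht1 := hrecT k hdk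
      have ht23 : t (k+1) ≤ (2/3) * t k := by
        nlinarith [mul_nonneg (by linarith : (0:ℝ) ≤ 1/3 - (g k + 2 * t k)) (ht0 k)]
      have httk : t (k+1) ≤ t k := by linarith [ht0 k]
      have hg1 : g (k+1) ≤ q * (g k + 2 * (s * t k)) := by
        refine (hrecG k).trans (mul_le_mul_of_nonneg_left ?_ hq0)
        nlinarith [mul_le_mul_of_nonneg_left httk hs0]
      have hgq1 : g (k+1) ≤ g k + 2 * (s * t k) := by
        nlinarith [mul_le_mul_of_nonneg_right hq1
          (by linarith [hg0 k] : (0:ℝ) ≤ g k + 2 * (s * t k))]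
      have hstk1 : s * t (k+1) ≤ (2/3) * (s * t k) := by
        nlinarith [mul_le_mul_of_nonneg_left ht23 hs0]
      constructor
      · linarith
      · have hqpow : q ^ (k+1) = q * q ^ k := by rw [pow_succ]; ring
        have h6 : q * g k ≤ q * (1/3 * q ^ k - 36 * (s * t k)) :=
          mul_le_mul_of_nonneg_left (by linarith) hq0
        have h7 : 0 ≤ (34 * q - 24) * (s * t k) := mul_nonneg (by linarith) hst0
        nlinarith [hg1, hstk1, h6, h7]
  intro k
  obtain ⟨hA, hB⟩ := key k
  have httk : t k ≤ s * t k := by nlinarith [ht0 k]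
  have hst0 : 0 ≤ s * t k := mul_nonneg hs0 (ht0 k)
  exact ⟨by linarith, by linarith⟩

end GBaux

open GBaux in
theorem greedy_broyden_superlinear_ratio {n : ℕ} (hn : 2 ≤ n)
    (F : (Fin n → ℝ) → (Fin n → ℝ))
    (J : (Fin n → ℝ) → Matrix (Fin n) (Fin n) ℝ)
    (hF : ∀ x, HasFDerivAt F (matCLM (J x)) x)
    (xs : Fin n → ℝ) (hxs : F xs = 0) (hJs : IsUnit (J xs))
    (c : ℝ) (hc : c = specNorm (J xs)⁻¹)
    (M : ℝ) (hM : 0 < M)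
    (hLip : ∀ x, specNorm (J x - J xs) ≤ M * vecNorm (x - xs))
    (x : ℕ → (Fin n → ℝ)) (B : ℕ → Matrix (Fin n) (Fin n) ℝ) (idx : ℕ → Fin n)
    (hBinv : ∀ k, IsUnit (B k))
    (hxrec : ∀ k, x (k + 1) = x k - (B k)⁻¹.mulVec (F (x k)))
    (hgreedy : ∀ k, ∀ i : Fin n,
      vecNorm ((B k - J (x (k + 1))).mulVec (Pi.single i 1))
        ≤ vecNorm ((B k - J (x (k + 1))).mulVec (Pi.single (idx k) 1)))
    (hBrec : ∀ k, B (k + 1) = broyd (B k) (J (x (k + 1))) (Pi.single (idx k) 1))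
    (hinit : 48 * Real.sqrt n * c * M * vecNorm (x 0 - xs)
      + c * frobNorm (B 0 - J (x 0)) ≤ 1 / 3) :
    ∀ k : ℕ, vecNorm (x (k + 1) - xs)
      ≤ Real.exp 1 * (1 - 1 / (n : ℝ)) ^ ((k : ℝ) / 2) * vecNorm (x k - xs) := by
  have hn1 : 1 ≤ n := le_trans (by norm_num) hn
  have hn0 : (0:ℝ) < n := by
    have h : 0 < n := lt_of_lt_of_le (by norm_num) hn
    exact_mod_cast h
  have hn2 : (2:ℝ) ≤ n := by exact_mod_cast hn
  set s : ℝ := Real.sqrt n with hs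
  set q : ℝ := Real.sqrt (1 - 1/(n:ℝ)) with hq
  have hc0 : 0 ≤ c := hc ▸ specNorm_nonneg hn1 _
  have hτ0 : ∀ k, 0 ≤ vecNorm (x k - xs) := fun k => vecNorm_nonneg _
  have hcM : 0 ≤ c * M := mul_nonneg hc0 hM.le
  have ht0 : ∀ k, 0 ≤ c * M * vecNorm (x k - xs) := fun k => mul_nonneg hcM (hτ0 k)
  have hg0 : ∀ k, 0 ≤ c * frobNorm (B k - J (x k)) :=
    fun k => mul_nonneg hc0 (frobNorm_nonneg _)
  have hs1 : (1:ℝ) ≤ s := by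
    rw [hs, Real.le_sqrt zero_le_one hn0.le, one_pow]
    exact_mod_cast hn1
  have hs0 : (0:ℝ) ≤ s := le_trans zero_le_one hs1
  have hinv0 : (0:ℝ) < 1/(n:ℝ) := by positivity
  have h12 : 1/(n:ℝ) ≤ 1/2 := by
    rw [div_le_div_iff₀ hn0 (by norm_num)]
    linarith
  have h1n : (0:ℝ) ≤ 1 - 1/(n:ℝ) := by linarith
  have hq0 : 0 ≤ q := Real.sqrt_nonneg _
  have hq1 : q ≤ 1 := Real.sqrt_le_one.2 (by linarith)
  have hq12 : (12:ℝ)/17 ≤ q := by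
    rw [hq, Real.le_sqrt (by norm_num) h1n]
    nlinarith
  -- the one-step contraction estimate
  have hstep : ∀ k, c * frobNorm (B k - J (x k)) + 2 * (c * M * vecNorm (x k - xs)) ≤ 1/3 →
      vecNorm (x (k+1) - xs)
        ≤ 2 * (c * frobNorm (B k - J (x k)) + 2 * (c * M * vecNorm (x k - xs)))
          * vecNorm (x k - xs) := by
    intro k hdk
    have hsm : c * frobNorm (B k - J (x k)) + c * M * vecNorm (x k - xs) ≤ 1/2 := by
      linarith [ht0 k]
    have h := step_bound hn1 F J hF xs hxs hJs c hc M hM.le hLip (B k) (hBinv k) (x k) hsm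
    rw [← hxrec k] at h
    exact h
  -- the greedy Frobenius-decrease plus change of measurement matrix
  have hrecG : ∀ k, c * frobNorm (B (k+1) - J (x (k+1)))
      ≤ q * (c * frobNorm (B k - J (x k))
        + s * (c * M * vecNorm (x k - xs) + c * M * vecNorm (x (k+1) - xs))) := by
    intro k
    have h := greedy_step hn1 (B k) (J (x (k+1))) (idx k) (hgreedy k)
    rw [← hq] at h
    have h1 : frobNorm (B k - J (x (k+1)))
        ≤ frobNorm (B k - J (x k))
          + s * (M * vecNorm (x k - xs) + M * vecNorm (x (k+1) - xs)) := by
      have h2 : frobNorm (J (x k) - J (x (k+1)))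
          ≤ s * specNorm (J (x k) - J (x (k+1))) := by
        rw [hs]; exact frobNorm_le_sqrtn_mul_spec hn1 _
      have h3 : specNorm (J (x k) - J (x (k+1)))
          ≤ M * vecNorm (x k - xs) + M * vecNorm (x (k+1) - xs) := by
        calc specNorm (J (x k) - J (x (k+1)))
            = specNorm ((J (x k) - J xs) - (J (x (k+1)) - J xs)) := by
              rw [show (J (x k) - J xs) - (J (x (k+1)) - J xs)
                = J (x k) - J (x (k+1)) by abel]
        _ ≤ specNorm (J (x k) - J xs) + specNorm (J (x (k+1)) - J xs) :=
              specNorm_sub_le hn1 _ _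
        _ ≤ M * vecNorm (x k - xs) + M * vecNorm (x (k+1) - xs) := by
              linarith [hLip (x k), hLip (x (k+1))]
      have h4 : frobNorm (B k - J (x (k+1)))
          ≤ frobNorm (B k - J (x k)) + frobNorm (J (x k) - J (x (k+1))) := by
        calc frobNorm (B k - J (x (k+1)))
            = frobNorm ((B k - J (x k)) + (J (x k) - J (x (k+1)))) := by
              rw [show (B k - J (x k)) + (J (x k) - J (x (k+1)))
                = B k - J (x (k+1)) by abel]
        _ ≤ _ := frobNorm_add_le _ _
      nlinarith [mul_le_mul_of_nonneg_left h3 hs0]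
    rw [hBrec k]
    calc c * frobNorm (broyd (B k) (J (x (k+1))) (Pi.single (idx k) 1) - J (x (k+1)))
        ≤ c * (q * frobNorm (B k - J (x (k+1)))) := mul_le_mul_of_nonneg_left h hc0
    _ ≤ c * (q * (frobNorm (B k - J (x k))
          + s * (M * vecNorm (x k - xs) + M * vecNorm (x (k+1) - xs)))) := by
        refine mul_le_mul_of_nonneg_left (mul_le_mul_of_nonneg_left h1 hq0) hc0
    _ = q * (c * frobNorm (B k - J (x k))
          + s * (c * M * vecNorm (x k - xs) + c * M * vecNorm (x (k+1) - xs))) := by ring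
  -- the t-recursion
  have hrecT : ∀ k, c * frobNorm (B k - J (x k)) + 2 * (c * M * vecNorm (x k - xs)) ≤ 1/3 →
      c * M * vecNorm (x (k+1) - xs)
        ≤ 2 * (c * frobNorm (B k - J (x k)) + 2 * (c * M * vecNorm (x k - xs)))
          * (c * M * vecNorm (x k - xs)) := by
    intro k hdk
    have h := mul_le_mul_of_nonneg_left (hstep k hdk) hcM
    nlinarith [h]
  -- the main invariant
  have h0' : c * frobNorm (B 0 - J (x 0)) + 48 * (s * (c * M * vecNorm (x 0 - xs))) ≤ 1/3 := by
    have hr : 48 * s * c * M * vecNorm (x 0 - xs)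
        = 48 * (s * (c * M * vecNorm (x 0 - xs))) := by ring
    linarith [hinit, hr.ge, hr.le]
  have key := abstract_rec (fun k => c * frobNorm (B k - J (x k)))
    (fun k => c * M * vecNorm (x k - xs)) s q hg0 ht0 hs1 hq0 hq1 hq12 h0' hrecT hrecG
  -- conclusion
  intro k
  obtain ⟨hA, hC⟩ := key k
  have hτstep := hstep k hA
  have hqk0 : 0 ≤ q ^ k := pow_nonneg hq0 k
  have he1 : (1:ℝ) ≤ Real.exp 1 := Real.one_le_exp (by norm_num)
  have hqpow : q ^ k = (1 - 1/(n:ℝ)) ^ ((k:ℝ)/2) := by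
    rw [hq, Real.sqrt_eq_rpow, ← Real.rpow_natCast ((1 - 1/(n:ℝ)) ^ ((1:ℝ)/2)) k,
      ← Real.rpow_mul h1n]
    rw [show (1:ℝ)/2 * (k:ℝ) = (k:ℝ)/2 by ring]
  rw [← hqpow]
  nlinarith [mul_le_mul_of_nonneg_right hC (hτ0 k), mul_nonneg hqk0 (hτ0 k), hτ0 k]
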